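/- Assume the standing hypotheses on (α,β) and p, and additionally p > n̂ + 1. For all integers i₀, k₀ with 2 ≤ i₀ ≤ n̂ and 1 ≤ k₀ ≤ p − b_{i₀} − 1, the rational function (−t + k₀ + i₀·p)·R(t) has nonvanishing denominator at t = k₀ + i₀·p (R has at most a simple pole there), and its value C_{i₀,k₀} at t = k₀ + i₀·p is a rational number with p-adic valuation at least 1 (that is, C_{i₀,k₀} ≡ 0 mod p). -/

import Mathlib

open scoped BigOperators
open Polynomial

noncomputable section

section AuxPadic
open Finset
variable {p : ℕ} [Fact (Nat.Prime p)]

lemma aux_norm_unit (m : ℤ) (h : ¬ (p:ℤ) ∣ m) : ‖((m:ℚ) : ℚ_[p])‖ = 1 := by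
  rw [Rat.cast_intCast]
  have h1 : ‖(m : ℚ_[p])‖ ≤ 1 := Padic.norm_int_le_one m
  have h2 : ¬ ‖(m : ℚ_[p])‖ < 1 := by
    rw [Padic.norm_intCast_lt_one_iff]; exact_mod_cast h
  linarith [lt_or_eq_of_le h1]

lemma aux_norm_unit' (m : ℤ) (h0 : m ≠ 0) (h1 : |m| < (p:ℤ)) : ‖((m:ℚ) : ℚ_[p])‖ = 1 := by
  refine aux_norm_unit m (fun hd => h0 (Int.eq_zero_of_abs_lt_dvd hd h1))

lemma aux_norm_int_le_one (m : ℤ) : ‖((m:ℚ) : ℚ_[p])‖ ≤ 1 := by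
  rw [Rat.cast_intCast]; exact Padic.norm_int_le_one m

lemma aux_norm_dvd (m : ℤ) (h : (p:ℤ) ∣ m) : ‖((m:ℚ) : ℚ_[p])‖ ≤ (p:ℝ)⁻¹ := by
  rw [Rat.cast_intCast]
  obtain ⟨w, rfl⟩ := h
  rw [Int.cast_mul, norm_mul]
  have hq : ‖((p:ℤ) : ℚ_[p])‖ = (p:ℝ)⁻¹ := by exact_mod_cast Padic.norm_p
  rw [hq]
  have h2 := Padic.norm_int_le_one (p := p) w
  have hp : (0:ℝ) < (p:ℝ)⁻¹ := by
    have := (Fact.out : Nat.Prime p).pos; positivity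
  nlinarith [norm_nonneg ((w:ℚ_[p]))]

lemma aux_norm_p_mul (w : ℤ) (h0 : w ≠ 0) (h1 : |w| < (p:ℤ)) :
    ‖((((p:ℤ) * w :ℤ):ℚ) : ℚ_[p])‖ = (p:ℝ)⁻¹ := by
  push_cast
  rw [norm_mul]
  have hq : ‖((p:ℕ) : ℚ_[p])‖ = (p:ℝ)⁻¹ := Padic.norm_p
  have hw : ‖((w:ℚ) : ℚ_[p])‖ = 1 := aux_norm_unit' w h0 h1
  rw [Rat.cast_intCast] at hw
  rw [hq, hw, mul_one]

/-- norm of a rational `x` with `(p-1)*x = m : ℤ` equals norm of `m`. -/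
lemma aux_norm_ratio (hp2 : 2 ≤ p) (x : ℚ) (m : ℤ) (h : ((p:ℚ)-1) * x = (m:ℚ)) :
    ‖(x : ℚ_[p])‖ = ‖((m:ℚ) : ℚ_[p])‖ := by
  have hq : ((((p:ℤ)-1 : ℤ):ℚ)) * x = (m:ℚ) := by push_cast; rw [← h]
  have hc : ((((p:ℤ)-1 : ℤ):ℚ) : ℚ_[p]) * (x:ℚ_[p]) = ((m:ℚ) : ℚ_[p]) := by
    rw [← Rat.cast_mul, hq]
  have hu : ‖((((p:ℤ)-1 : ℤ):ℚ) : ℚ_[p])‖ = 1 := by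
    apply aux_norm_unit'
    · omega
    · rw [abs_of_nonneg (by omega : (0:ℤ) ≤ (p:ℤ)-1)]; omega
  calc ‖(x : ℚ_[p])‖ = ‖((((p:ℤ)-1:ℤ):ℚ) : ℚ_[p])‖ * ‖(x:ℚ_[p])‖ := by rw [hu, one_mul]
    _ = ‖((m:ℚ):ℚ_[p])‖ := by rw [← norm_mul, hc]

lemma aux_prod_le_of_mem {ι : Type*} [DecidableEq ι] (s : Finset ι) (f : ι → ℝ)
    (h0 : ∀ i ∈ s, 0 ≤ f i) (h1 : ∀ i ∈ s, f i ≤ 1) (j : ι) (hj : j ∈ s)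
    (c : ℝ) (hc : 0 ≤ c) (hfj : f j ≤ c) : ∏ i ∈ s, f i ≤ c := by
  rw [← Finset.mul_prod_erase s f hj]
  have hrest : ∏ i ∈ s.erase j, f i ≤ 1 :=
    Finset.prod_le_one (fun i hi => h0 i (Finset.mem_of_mem_erase hi))
      (fun i hi => h1 i (Finset.mem_of_mem_erase hi))
  have hrest0 : 0 ≤ ∏ i ∈ s.erase j, f i :=
    Finset.prod_nonneg (fun i hi => h0 i (Finset.mem_of_mem_erase hi))
  calc f j * ∏ i ∈ s.erase j, f i ≤ c * 1 := mul_le_mul hfj hrest hrest0 hc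
    _ = c := mul_one c

lemma aux_assembly (n nhat i0 : ℕ) (c : ℝ) (hc : 0 ≤ c)
    (hnn : nhat + 2 ≤ n) (hi0 : 2 ≤ i0) (hi0' : i0 ≤ nhat) (F G : ℕ → ℝ)
    (hF0 : ∀ i, 0 ≤ F i)
    (hF1 : ∀ i, 2 ≤ i → i ≤ n → F i ≤ 1)
    (hF2 : F 2 ≤ c) (hF3 : F 3 ≤ c) (hFi0 : F (i0+2) ≤ c)
    (hFG : ∀ i, 2 ≤ i → i ≤ nhat → i ≠ i0 → F (i+2) ≤ G i)
    (hGi0 : G i0 = 1) (hG0 : ∀ i, 0 ≤ G i) :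
    (∏ i ∈ Finset.Icc 2 n, F i) ≤ c * (c^2 * ∏ i ∈ Finset.Icc 2 nhat, G i) := by
  classical
  have h2nhat : 2 ≤ nhat := le_trans hi0 hi0'
  set S3 : Finset ℕ := (Finset.Icc 2 nhat).image (fun i => i + 2) with hS3
  set T : Finset ℕ := insert 2 (insert 3 S3) with hT
  have hmemS3 : ∀ x, x ∈ S3 → 4 ≤ x ∧ x ≤ nhat + 2 := by
    intro x hx
    rw [hS3, Finset.mem_image] at hx
    obtain ⟨y, hy, rfl⟩ := hx
    rw [Finset.mem_Icc] at hy
    omega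
  have hTsub : T ⊆ Finset.Icc 2 n := by
    intro x hx
    rw [hT, Finset.mem_insert, Finset.mem_insert] at hx
    rw [Finset.mem_Icc]
    rcases hx with rfl | rfl | hx
    · omega
    · omega
    · have := hmemS3 x hx; omega
  have step1 : (∏ i ∈ Finset.Icc 2 n, F i) ≤ ∏ i ∈ T, F i := by
    rw [← Finset.prod_sdiff hTsub]
    have h1 : (∏ i ∈ Finset.Icc 2 n \ T, F i) ≤ 1 := by
      apply Finset.prod_le_one (fun i _ => hF0 i)
      intro i hi
      have hi2 := Finset.mem_sdiff.1 hi
      rw [Finset.mem_Icc] at hi2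
      exact hF1 i hi2.1.1 hi2.1.2
    have h2 : (0:ℝ) ≤ ∏ i ∈ T, F i := Finset.prod_nonneg (fun i _ => hF0 i)
    exact mul_le_of_le_one_left h2 h1
  have h2ni : (2:ℕ) ∉ insert 3 S3 := by
    rw [Finset.mem_insert]
    rintro (h | h)
    · omega
    · have := hmemS3 2 h; omega
  have h3ni : (3:ℕ) ∉ S3 := by
    intro h; have := hmemS3 3 h; omega
  have step2 : (∏ i ∈ T, F i) = F 2 * (F 3 * ∏ i ∈ S3, F i) := by
    rw [hT, Finset.prod_insert h2ni, Finset.prod_insert h3ni]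
  have step3 : (∏ i ∈ S3, F i) = ∏ i ∈ Finset.Icc 2 nhat, F (i + 2) := by
    rw [hS3, Finset.prod_image]
    intro x _ y _ h; simp only at h; omega
  have hi0mem : i0 ∈ Finset.Icc 2 nhat := Finset.mem_Icc.2 ⟨hi0, hi0'⟩
  have step4 : (∏ i ∈ Finset.Icc 2 nhat, F (i + 2)) ≤
      c * ∏ i ∈ Finset.Icc 2 nhat, G i := by
    rw [← Finset.mul_prod_erase _ (fun i => F (i+2)) hi0mem,
        ← Finset.mul_prod_erase _ G hi0mem, hGi0, one_mul]
    have hterm : (∏ i ∈ (Finset.Icc 2 nhat).erase i0, F (i + 2)) ≤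
        ∏ i ∈ (Finset.Icc 2 nhat).erase i0, G i := by
      apply Finset.prod_le_prod (fun i _ => hF0 _)
      intro i hi
      have h1 := Finset.mem_erase.1 hi
      have h2 := Finset.mem_Icc.1 h1.2
      exact hFG i h2.1 h2.2 h1.1
    have h0 : (0:ℝ) ≤ ∏ i ∈ (Finset.Icc 2 nhat).erase i0, F (i + 2) :=
      Finset.prod_nonneg (fun i _ => hF0 _)
    exact mul_le_mul hFi0 hterm h0 hc
  have hGprod0 : (0:ℝ) ≤ ∏ i ∈ Finset.Icc 2 nhat, G i :=
    Finset.prod_nonneg (fun i _ => hG0 i)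
  calc (∏ i ∈ Finset.Icc 2 n, F i) ≤ ∏ i ∈ T, F i := step1
    _ = F 2 * (F 3 * ∏ i ∈ Finset.Icc 2 nhat, F (i+2)) := by rw [step2, step3]
    _ ≤ c * (c * (c * ∏ i ∈ Finset.Icc 2 nhat, G i)) := by
        apply mul_le_mul hF2 _ _ hc
        · apply mul_le_mul hF3 step4 _ hc
          · exact Finset.prod_nonneg (fun i _ => hF0 _)
        · apply mul_nonneg (hF0 3)
          exact Finset.prod_nonneg (fun i _ => hF0 _)
    _ = c * (c^2 * ∏ i ∈ Finset.Icc 2 nhat, G i) := by ring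

end AuxPadic

/-- The rising factorial (Pochhammer symbol) `(a)_k` for a rational `a`. -/
def poch (a : ℚ) (k : ℕ) : ℚ := Polynomial.eval a (ascPochhammer ℚ k)

/-- The numerator `N(t) = ∏_{i=2}^{n} ∏_{j=0}^{p−aᵢ−2} (t + 1 − rᵢ − p + j)` of the rational
function `R(t)`, as a polynomial (`r`, `a` are 0-based: `rᵢ = r (i−1)`, `aᵢ = a (i−1)`). -/
def Rnum (n p : ℕ) (r : ℕ → ℚ) (a : ℕ → ℕ) : ℚ[X] :=
  ∏ i ∈ Finset.Icc 2 n, ∏ j ∈ Finset.range (p - a (i - 1) - 1),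
    (X + C (1 - r (i - 1) - (p : ℚ) + (j : ℚ)))

/-- The first three blocks of the denominator `D(t)` of `R(t)`:
`∏_{j=0}^{a₁}(t+j)² · ∏_{j=0}^{b₁−a₁−1}(t+a₁+1+j) · ∏_{j=0}^{p−b₁−2}(t+b₁+1+j)²`
(here `a₁ = a 0`, `b₁ = b 0`). -/
def RdenMain (p a1 b1 : ℕ) : ℚ[X] :=
  (∏ j ∈ Finset.range (a1 + 1), (X + C (j : ℚ)) ^ 2) *
    (∏ j ∈ Finset.range (b1 - a1), (X + C ((a1 : ℚ) + 1 + j))) *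
    ∏ j ∈ Finset.range (p - b1 - 1), (X + C ((b1 : ℚ) + 1 + j)) ^ 2

set_option maxHeartbeats 1000000 in
/-- Under the standing hypotheses on `(α,β)` and `p ≡ 1 (mod M)` with
`p > n̂ + 1`: for `2 ≤ i₀ ≤ n̂` and `1 ≤ k₀ ≤ p − b_{i₀} − 1`, the rational function
`(−t + k₀ + i₀p)·R(t)` has nonvanishing denominator at `t = k₀ + i₀p` (so `R` has at most a
simple pole there), and its value `C_{i₀,k₀}` there satisfies `C_{i₀,k₀} ≡ 0 (mod p)`. -/
theorem residue_Cik_vanishes_mod_p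
    (n : ℕ) (hn : 2 ≤ n)
    (r q : ℕ → ℚ)
    (hr_pos : ∀ i, i < n → 0 < r i) (hr_lt : ∀ i, i < n → r i < 1)
    (hr_mono : ∀ i j, i ≤ j → j < n → r i ≤ r j)
    (hq_pos : ∀ i, i < n → 0 < q i)
    (hq_mono : ∀ i j, i ≤ j → j < n → q i ≤ q j)
    (hq_top : q (n - 1) = 1) (hq_top' : q (n - 2) = 1)
    (hqr : ∀ j, j + 2 < n → r (j + 2) < q j)
    (hprim : ∀ i, i < n → ∀ j, j < n → ∀ z : ℤ, r i - q j ≠ (z : ℚ))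
    (M : ℕ) (hM : 0 < M)
    (hMr : ∀ i, i < n → ∃ z : ℤ, (M : ℚ) * r i = (z : ℚ))
    (hMq : ∀ i, i < n → ∃ z : ℤ, (M : ℚ) * q i = (z : ℚ))
    (p : ℕ) [Fact (Nat.Prime p)] (hpM : p ≡ 1 [MOD M])
    (a b : ℕ → ℕ)
    (ha : ∀ i, i < n → (a i : ℚ) = ((p : ℚ) - 1) * r i)
    (hb : ∀ i, i < n → (b i : ℚ) = ((p : ℚ) - 1) * q i)
    (nhat : ℕ) (hnhat_le : nhat ≤ n) (hnhat0 : nhat = 0 ∨ 2 ≤ nhat)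
    (hnhat : ∀ i, 2 ≤ i → i ≤ n → (q (i - 1) < 1 ↔ i ≤ nhat))
    (hp_nhat : nhat + 1 < p)
    (i0 k0 : ℕ) (hi0 : 2 ≤ i0) (hi0' : i0 ≤ nhat)
    (hk0 : 1 ≤ k0) (hk0' : k0 ≤ p - b (i0 - 1) - 1) :
    -- the denominator of `(−t + k₀ + i₀p)·R(t)`, i.e. `D(t)` with the factor
    -- `(−t + 1 + i₀p + (k₀−1))` removed, does not vanish at `t = k₀ + i₀p`,
    (RdenMain p (a 0) (b 0) *
        ∏ i ∈ Finset.Icc 2 nhat,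
          ∏ j ∈ (Finset.range (p - b (i - 1) - 1)).filter (fun j => ¬(i = i0 ∧ j = k0 - 1)),
            (-X + C (1 + (i : ℚ) * p + (j : ℚ)))).eval ((k0 : ℚ) + (i0 : ℚ) * p) ≠ 0 ∧
      -- and the value `C_{i₀,k₀}` of `(−t + k₀ + i₀p)·R(t)` at `t = k₀ + i₀p` is `≡ 0 mod p`:
      ∃ c : ℤ_[p],
        (((Rnum n p r a).eval ((k0 : ℚ) + (i0 : ℚ) * p) /
            (RdenMain p (a 0) (b 0) *
              ∏ i ∈ Finset.Icc 2 nhat,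
                ∏ j ∈ (Finset.range (p - b (i - 1) - 1)).filter
                    (fun j => ¬(i = i0 ∧ j = k0 - 1)),
                  (-X + C (1 + (i : ℚ) * p + (j : ℚ)))).eval ((k0 : ℚ) + (i0 : ℚ) * p)
          : ℚ) : ℚ_[p]) = (p : ℚ_[p]) * (c : ℚ_[p]) := by
  classical
  have hp : p.Prime := Fact.out
  have hp2 : 2 ≤ p := hp.two_le
  set t0 : ℚ := (k0 : ℚ) + (i0 : ℚ) * p with ht0
  -- basic index facts
  have h2nhat : 2 ≤ nhat := le_trans hi0 hi0'
  have hn4 : nhat + 2 ≤ n := by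
    by_contra hcon
    have h1 : q (nhat - 1) < 1 := (hnhat nhat h2nhat hnhat_le).2 le_rfl
    have h2 : nhat - 1 = n - 1 ∨ nhat - 1 = n - 2 := by omega
    rcases h2 with h2 | h2 <;> rw [h2] at h1
    · rw [hq_top] at h1; exact lt_irrefl 1 h1
    · rw [hq_top'] at h1; exact lt_irrefl 1 h1
  have hpQ : (1:ℚ) < (p:ℚ) := by exact_mod_cast hp2
  -- comparison between a, b via r, q
  have hab : ∀ u v : ℕ, u < n → v < n → r u < q v → a u < b v := by
    intro u v hu hv hlt
    have h1 : (a u : ℚ) < (b v : ℚ) := by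
      rw [ha u hu, hb v hv]
      have hpos : (0:ℚ) < (p:ℚ) - 1 := by linarith
      exact mul_lt_mul_of_pos_left hlt hpos
    exact_mod_cast h1
  have hble : ∀ v, v < n → b v ≤ p - 1 := by
    intro v hv
    have hq1 : q v ≤ 1 := by
      have := hq_mono v (n-1) (by omega) (by omega); rw [hq_top] at this; exact this
    have h1 : (b v : ℚ) ≤ ((p - 1 : ℕ) : ℚ) := by
      rw [hb v hv]
      have : ((p - 1 : ℕ) : ℚ) = (p:ℚ) - 1 := by
        have : (1:ℕ) ≤ p := by omega
        push_cast [this]; ring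
      rw [this]; nlinarith
    exact_mod_cast h1
  have hbpos : ∀ v, v < n → 1 ≤ b v := by
    intro v hv
    have h1 : (0 : ℚ) < (b v : ℚ) := by
      rw [hb v hv]; have := hq_pos v hv; nlinarith
    have : b v ≠ 0 := by intro h; rw [h] at h1; simp at h1
    omega
  have hamono : ∀ u v : ℕ, u ≤ v → v < n → a u ≤ a v := by
    intro u v huv hv
    have h1 : (a u : ℚ) ≤ (a v : ℚ) := by
      rw [ha u (by omega), ha v hv]
      have := hr_mono u v huv hv; nlinarith
    exact_mod_cast h1
  have hbmono : ∀ u v : ℕ, u ≤ v → v < n → b u ≤ b v := by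
    intro u v huv hv
    have h1 : (b u : ℚ) ≤ (b v : ℚ) := by
      rw [hb u (by omega), hb v hv]
      have := hq_mono u v huv hv; nlinarith
    exact_mod_cast h1
  -- key matching inequalities
  have hbound_i0 : ∀ u, u ≤ i0 + 1 → a u < b (i0 - 1) := by
    intro u hu
    apply hab u (i0-1) (by omega) (by omega)
    have h1 : r u ≤ r (i0 + 1) := hr_mono u (i0+1) hu (by omega)
    have h2 : r (i0 - 1 + 2) < q (i0 - 1) := hqr (i0-1) (by omega)
    have h3 : i0 - 1 + 2 = i0 + 1 := by omega
    rw [h3] at h2; linarith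
  have hk0b : k0 + b (i0 - 1) ≤ p - 1 := by
    have := hble (i0-1) (by omega); omega
  have cm1 : k0 + a 1 ≤ p - 1 := by have := hbound_i0 1 (by omega); omega
  have cm2 : k0 + a 2 ≤ p - 1 := by have := hbound_i0 2 (by omega); omega
  have cm3 : k0 + a (i0 + 1) ≤ p - 1 := by have := hbound_i0 (i0+1) le_rfl; omega
  have cm4 : ∀ i, 2 ≤ i → i ≤ nhat → k0 - 1 < p - b (i-1) - 1 → k0 + a (i + 1) ≤ p - 1 := by
    intro i hi2 hile hkr
    have h2 : r (i - 1 + 2) < q (i - 1) := hqr (i-1) (by omega)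
    have h3 : i - 1 + 2 = i + 1 := by omega
    rw [h3] at h2
    have h4 : a (i+1) < b (i-1) := hab (i+1) (i-1) (by omega) (by omega) h2
    have := hble (i-1) (by omega)
    omega
  have hppos : (0:ℝ) < (p:ℝ) := by positivity
  have hpinv0 : (0:ℝ) < (p:ℝ)⁻¹ := by positivity
  -- cast identity for numerator factors
  have hNfacQ : ∀ i j : ℕ, 2 ≤ i → i ≤ n →
      ((p:ℚ)-1) * (t0 + (1 - r (i-1) - (p:ℚ) + (j:ℚ))) =
        ((((p:ℤ)-1) * ((k0:ℤ) + (i0:ℤ)*(p:ℤ) + 1 - (p:ℤ) + (j:ℤ)) - (a (i-1) : ℤ) : ℤ) : ℚ) := by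
    intro i j h2 hle
    have hr := ha (i-1) (by omega)
    rw [ht0]; push_cast
    linear_combination hr
  -- numerator inner-product norm bounds
  have c1 : ∀ i, 2 ≤ i → i ≤ n →
      (∏ j ∈ Finset.range (p - a (i-1) - 1),
        ‖((t0 + (1 - r (i-1) - (p:ℚ) + (j:ℚ)) : ℚ) : ℚ_[p])‖) ≤ 1 := by
    intro i h2 hle
    apply Finset.prod_le_one (fun j _ => norm_nonneg _)
    intro j _
    rw [aux_norm_ratio hp2 _ _ (hNfacQ i j h2 hle)]
    exact aux_norm_int_le_one _
  have hNN0 : ∀ i, (0:ℝ) ≤ ∏ j ∈ Finset.range (p - a (i-1) - 1),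
      ‖((t0 + (1 - r (i-1) - (p:ℚ) + (j:ℚ)) : ℚ) : ℚ_[p])‖ :=
    fun i => Finset.prod_nonneg (fun j _ => norm_nonneg _)
  have c2 : ∀ i, 2 ≤ i → i ≤ n → k0 + a (i-1) ≤ p - 1 →
      (∏ j ∈ Finset.range (p - a (i-1) - 1),
        ‖((t0 + (1 - r (i-1) - (p:ℚ) + (j:ℚ)) : ℚ) : ℚ_[p])‖) ≤ (p:ℝ)⁻¹ := by
    intro i h2 hle hka
    apply aux_prod_le_of_mem _ _ (fun j _ => norm_nonneg _) ?_ (p - 1 - k0 - a (i-1)) ?_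
      ((p:ℝ)⁻¹) (le_of_lt hpinv0) ?_
    · intro j _
      rw [aux_norm_ratio hp2 _ _ (hNfacQ i j h2 hle)]
      exact aux_norm_int_le_one _
    · rw [Finset.mem_range]; omega
    · rw [aux_norm_ratio hp2 _ _ (hNfacQ i (p - 1 - k0 - a (i-1)) h2 hle)]
      apply aux_norm_dvd
      refine ⟨((p:ℤ)-1) * (i0:ℤ) - (a (i-1) : ℤ), ?_⟩
      have hj : ((p - 1 - k0 - a (i-1) : ℕ) : ℤ) = (p:ℤ) - 1 - (k0:ℤ) - (a (i-1):ℤ) := by omega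
      rw [hj]; ring
  -- denominator block-4 factor facts
  have hDfacQ : ∀ i j : ℕ, (-t0 + (1 + (i:ℚ)*(p:ℚ) + (j:ℚ))) =
      ((1 + (j:ℤ) - (k0:ℤ) + ((i:ℤ) - (i0:ℤ))*(p:ℤ) : ℤ) : ℚ) := by
    intro i j; rw [ht0]; push_cast; ring
  have hk0p : k0 ≤ p - 2 := by
    have := hbpos (i0-1) (by omega); omega
  have hDunit : ∀ i j : ℕ, j ≠ k0 - 1 → j + 2 ≤ p →
      ‖((-t0 + (1 + (i:ℚ)*(p:ℚ) + (j:ℚ)) : ℚ) : ℚ_[p])‖ = 1 := by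
    intro i j hjne hjle
    rw [hDfacQ]
    apply aux_norm_unit
    intro hdvd
    have h2 : (p:ℤ) ∣ (1 + (j:ℤ) - (k0:ℤ)) := by
      have h3 : (p:ℤ) ∣ ((i:ℤ) - (i0:ℤ))*(p:ℤ) := Dvd.intro_left _ rfl
      have h4 := dvd_sub hdvd h3
      have h5 : (1 + (j:ℤ) - (k0:ℤ) + ((i:ℤ) - (i0:ℤ))*(p:ℤ)) - ((i:ℤ) - (i0:ℤ))*(p:ℤ)
          = 1 + (j:ℤ) - (k0:ℤ) := by ring
      rwa [h5] at h4
    have h6 : |1 + (j:ℤ) - (k0:ℤ)| < (p:ℤ) := by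
      rw [abs_lt]; constructor <;> omega
    have h7 := Int.eq_zero_of_abs_lt_dvd h2 h6
    omega
  have hDspecial : ∀ i : ℕ, 2 ≤ i → i ≤ nhat → i ≠ i0 →
      ‖((-t0 + (1 + (i:ℚ)*(p:ℚ) + ((k0 - 1 : ℕ):ℚ)) : ℚ) : ℚ_[p])‖ = (p:ℝ)⁻¹ := by
    intro i h2 hle hne
    rw [hDfacQ]
    have h1 : ((k0 - 1 : ℕ):ℤ) = (k0:ℤ) - 1 := by omega
    have h3 : (1 + ((k0-1:ℕ):ℤ) - (k0:ℤ) + ((i:ℤ) - (i0:ℤ))*(p:ℤ))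
        = (p:ℤ) * ((i:ℤ) - (i0:ℤ)) := by rw [h1]; ring
    rw [h3]
    apply aux_norm_p_mul
    · have : (i:ℤ) ≠ (i0:ℤ) := by exact_mod_cast hne
      exact sub_ne_zero.2 this
    · rw [abs_lt]; constructor <;> omega
  -- value of the block-4 inner products
  have hDD : ∀ i, 2 ≤ i → i ≤ nhat →
      (∏ j ∈ (Finset.range (p - b (i - 1) - 1)).filter (fun j => ¬(i = i0 ∧ j = k0 - 1)),
        ‖((-t0 + (1 + (i:ℚ)*(p:ℚ) + (j:ℚ)) : ℚ) : ℚ_[p])‖) =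
      if i ≠ i0 ∧ k0 - 1 < p - b (i-1) - 1 then (p:ℝ)⁻¹ else 1 := by
    intro i h2 hle
    have hb1 : 1 ≤ b (i-1) := hbpos (i-1) (by omega)
    by_cases hii : i = i0
    · rw [if_neg (by simp [hii])]
      apply Finset.prod_eq_one
      intro j hj
      rw [Finset.mem_filter, Finset.mem_range] at hj
      have hjne : j ≠ k0 - 1 := fun h => hj.2 ⟨hii, h⟩
      exact hDunit i j hjne (by omega)
    · by_cases hk : k0 - 1 < p - b (i-1) - 1
      · rw [if_pos ⟨hii, hk⟩]
        rw [Finset.prod_eq_single_of_mem (k0 - 1)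
          (Finset.mem_filter.2 ⟨Finset.mem_range.2 hk, fun hcon => hii hcon.1⟩)]
        · exact hDspecial i h2 hle hii
        · intro j hj hjne
          rw [Finset.mem_filter, Finset.mem_range] at hj
          exact hDunit i j hjne (by omega)
      · rw [if_neg (by tauto)]
        apply Finset.prod_eq_one
        intro j hj
        rw [Finset.mem_filter, Finset.mem_range] at hj
        have hjne : j ≠ k0 - 1 := by omega
        exact hDunit i j hjne (by omega)
  -- unit norms for natural numbers m + i0*p with m in (0, 2p), m ≠ p
  have hunit_nat : ∀ m : ℕ, 1 ≤ m → m ≠ p → m < 2*p →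
      ‖(((m + i0*p : ℕ) : ℚ) : ℚ_[p])‖ = 1 := by
    intro m h1 h2 h3
    have hcast : (((m + i0*p : ℕ) : ℚ)) = (((m + i0*p : ℕ) : ℤ) : ℚ) := by push_cast; ring
    rw [hcast]
    apply aux_norm_unit
    intro hdvd
    have hdvd' : p ∣ m + i0 * p := by exact_mod_cast hdvd
    have hdm : p ∣ m := (Nat.dvd_add_iff_left (Dvd.intro_left i0 rfl)).2 hdvd'
    have h4 := Nat.le_of_dvd (by omega) hdm
    have h5 : p ∣ m - p := Nat.dvd_sub hdm dvd_rfl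
    have h6 : m - p ≠ 0 := by omega
    have h7 := Nat.le_of_dvd (by omega) h5
    omega
  have hk0b0 : k0 + b 0 ≤ p - 1 := by
    have := hbmono 0 (i0-1) (by omega) (by omega); omega
  have ha0b : a 0 < b (i0 - 1) := by
    have h1 := hamono 0 1 (by omega) (by omega)
    have := hbound_i0 1 (by omega); omega
  -- block 1 norms
  have hB1 : ∀ j : ℕ, j ≤ a 0 → ‖((t0 + (j:ℚ) : ℚ) : ℚ_[p])‖ = 1 := by
    intro j hj
    have hcast : (t0 + (j:ℚ)) = (((k0 + j) + i0*p : ℕ) : ℚ) := by rw [ht0]; push_cast; ring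
    rw [hcast]
    exact hunit_nat (k0 + j) (by omega) (by omega) (by omega)
  -- block 2 norms
  have hB2 : ∀ j : ℕ, j < b 0 - a 0 → ‖((t0 + ((a 0 : ℚ) + 1 + (j:ℚ)) : ℚ) : ℚ_[p])‖ = 1 := by
    intro j hj
    have hcast : (t0 + ((a 0:ℚ) + 1 + (j:ℚ))) = (((k0 + (a 0 + 1 + j)) + i0*p : ℕ) : ℚ) := by
      rw [ht0]; push_cast; ring
    rw [hcast]
    exact hunit_nat (k0 + (a 0 + 1 + j)) (by omega) (by omega) (by omega)
  -- block 3 norms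
  have hB3unit : ∀ j : ℕ, j < p - b 0 - 1 → j ≠ p - k0 - b 0 - 1 →
      ‖((t0 + ((b 0 : ℚ) + 1 + (j:ℚ)) : ℚ) : ℚ_[p])‖ = 1 := by
    intro j hj hjne
    have hcast : (t0 + ((b 0:ℚ) + 1 + (j:ℚ))) = (((k0 + (b 0 + 1 + j)) + i0*p : ℕ) : ℚ) := by
      rw [ht0]; push_cast; ring
    rw [hcast]
    exact hunit_nat (k0 + (b 0 + 1 + j)) (by omega) (by omega) (by omega)
  have hB3special :
      ‖((t0 + ((b 0 : ℚ) + 1 + ((p - k0 - b 0 - 1 : ℕ):ℚ)) : ℚ) : ℚ_[p])‖ = (p:ℝ)⁻¹ := by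
    have hj : ((p - k0 - b 0 - 1 : ℕ) : ℚ) = (p:ℚ) - (k0:ℚ) - (b 0:ℚ) - 1 := by
      have h1 : ((p - k0 - b 0 - 1 : ℕ) : ℤ) = (p:ℤ) - (k0:ℤ) - (b 0:ℤ) - 1 := by omega
      exact_mod_cast h1
    have hcast : (t0 + ((b 0:ℚ) + 1 + ((p - k0 - b 0 - 1 : ℕ):ℚ)))
        = (((p:ℤ) * (1 + (i0:ℤ)) : ℤ) : ℚ) := by
      rw [ht0, hj]; push_cast; ring
    rw [hcast]
    exact aux_norm_p_mul (1 + (i0:ℤ)) (by omega) (by rw [abs_lt]; constructor <;> omega)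
  -- evaluation formulas
  have hDevalQ : (RdenMain p (a 0) (b 0) *
        ∏ i ∈ Finset.Icc 2 nhat,
          ∏ j ∈ (Finset.range (p - b (i - 1) - 1)).filter (fun j => ¬(i = i0 ∧ j = k0 - 1)),
            (-X + C (1 + (i : ℚ) * p + (j : ℚ)))).eval t0 =
      (∏ j ∈ Finset.range (a 0 + 1), (t0 + (j:ℚ))^2) *
      (∏ j ∈ Finset.range (b 0 - a 0), (t0 + ((a 0:ℚ)+1+(j:ℚ)))) *
      (∏ j ∈ Finset.range (p - b 0 - 1), (t0 + ((b 0:ℚ)+1+(j:ℚ)))^2) *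
      ∏ i ∈ Finset.Icc 2 nhat,
        ∏ j ∈ (Finset.range (p - b (i-1) - 1)).filter (fun j => ¬(i = i0 ∧ j = k0-1)),
          (-t0 + (1 + (i:ℚ)*p + (j:ℚ))) := by
    simp [RdenMain, Polynomial.eval_prod, mul_assoc]
  have hNevalQ : (Rnum n p r a).eval t0 =
      ∏ i ∈ Finset.Icc 2 n, ∏ j ∈ Finset.range (p - a (i-1) - 1),
        (t0 + (1 - r (i-1) - (p:ℚ) + (j:ℚ))) := by
    simp [Rnum, Polynomial.eval_prod]
  -- norm of the denominator value
  have hDnormval : ‖(((RdenMain p (a 0) (b 0) *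
        ∏ i ∈ Finset.Icc 2 nhat,
          ∏ j ∈ (Finset.range (p - b (i - 1) - 1)).filter (fun j => ¬(i = i0 ∧ j = k0 - 1)),
            (-X + C (1 + (i : ℚ) * p + (j : ℚ)))).eval t0 : ℚ) : ℚ_[p])‖ =
      ((p:ℝ)⁻¹)^2 * ∏ i ∈ Finset.Icc 2 nhat,
        ∏ j ∈ (Finset.range (p - b (i-1) - 1)).filter (fun j => ¬(i = i0 ∧ j = k0-1)),
          ‖((-t0 + (1 + (i:ℚ)*(p:ℚ) + (j:ℚ)) : ℚ) : ℚ_[p])‖ := by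
    rw [hDevalQ]
    simp only [Rat.cast_mul, norm_mul, Rat.cast_prod, norm_prod, Rat.cast_pow, norm_pow]
    have e1 : (∏ j ∈ Finset.range (a 0 + 1), ‖((t0 + (j:ℚ) : ℚ) : ℚ_[p])‖^2) = 1 := by
      apply Finset.prod_eq_one
      intro j hj
      rw [Finset.mem_range] at hj
      rw [hB1 j (by omega), one_pow]
    have e2 : (∏ j ∈ Finset.range (b 0 - a 0),
        ‖((t0 + ((a 0:ℚ)+1+(j:ℚ)) : ℚ) : ℚ_[p])‖) = 1 := by
      apply Finset.prod_eq_one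
      intro j hj
      rw [Finset.mem_range] at hj
      exact hB2 j hj
    have e3 : (∏ j ∈ Finset.range (p - b 0 - 1),
        ‖((t0 + ((b 0:ℚ)+1+(j:ℚ)) : ℚ) : ℚ_[p])‖^2) = ((p:ℝ)⁻¹)^2 := by
      rw [Finset.prod_eq_single_of_mem (p - k0 - b 0 - 1)
        (Finset.mem_range.2 (by omega))]
      · rw [hB3special]
      · intro j hj hjne
        rw [Finset.mem_range] at hj
        rw [hB3unit j hj hjne, one_pow]
    rw [e1, e2, e3, one_mul, one_mul]
  have hprodDD_pos : (0:ℝ) < ∏ i ∈ Finset.Icc 2 nhat,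
      ∏ j ∈ (Finset.range (p - b (i-1) - 1)).filter (fun j => ¬(i = i0 ∧ j = k0-1)),
        ‖((-t0 + (1 + (i:ℚ)*(p:ℚ) + (j:ℚ)) : ℚ) : ℚ_[p])‖ := by
    apply Finset.prod_pos
    intro i hi
    rw [Finset.mem_Icc] at hi
    rw [hDD i hi.1 hi.2]
    split_ifs
    · exact hpinv0
    · exact one_pos
  have hDnormpos : (0:ℝ) < ‖(((RdenMain p (a 0) (b 0) *
        ∏ i ∈ Finset.Icc 2 nhat,
          ∏ j ∈ (Finset.range (p - b (i - 1) - 1)).filter (fun j => ¬(i = i0 ∧ j = k0 - 1)),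
            (-X + C (1 + (i : ℚ) * p + (j : ℚ)))).eval t0 : ℚ) : ℚ_[p])‖ := by
    rw [hDnormval]
    exact mul_pos (pow_pos hpinv0 2) hprodDD_pos
  have hDne : (RdenMain p (a 0) (b 0) *
        ∏ i ∈ Finset.Icc 2 nhat,
          ∏ j ∈ (Finset.range (p - b (i - 1) - 1)).filter (fun j => ¬(i = i0 ∧ j = k0 - 1)),
            (-X + C (1 + (i : ℚ) * p + (j : ℚ)))).eval t0 ≠ 0 := by
    intro h0
    rw [h0] at hDnormpos
    simp at hDnormpos
  -- norm of the numerator value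
  have hNnormval : ‖(((Rnum n p r a).eval t0 : ℚ) : ℚ_[p])‖ =
      ∏ i ∈ Finset.Icc 2 n, ∏ j ∈ Finset.range (p - a (i-1) - 1),
        ‖((t0 + (1 - r (i-1) - (p:ℚ) + (j:ℚ)) : ℚ) : ℚ_[p])‖ := by
    rw [hNevalQ]
    simp only [Rat.cast_prod, norm_prod]
  -- the key estimate
  have hFG' : ∀ i, 2 ≤ i → i ≤ nhat → i ≠ i0 →
      (∏ j ∈ Finset.range (p - a (i+2-1) - 1),
        ‖((t0 + (1 - r (i+2-1) - (p:ℚ) + (j:ℚ)) : ℚ) : ℚ_[p])‖) ≤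
      ∏ j ∈ (Finset.range (p - b (i-1) - 1)).filter (fun j => ¬(i = i0 ∧ j = k0-1)),
        ‖((-t0 + (1 + (i:ℚ)*(p:ℚ) + (j:ℚ)) : ℚ) : ℚ_[p])‖ := by
    intro i h1 h2 hne
    by_cases hk : k0 - 1 < p - b (i-1) - 1
    · have h3 := c2 (i+2) (by omega) (by omega) (cm4 i h1 h2 hk)
      rw [hDD i h1 h2, if_pos ⟨hne, hk⟩]
      exact h3
    · rw [hDD i h1 h2, if_neg (fun hcon => hk hcon.2)]
      exact c1 (i+2) (by omega) (by omega)
  have hGi0' : (∏ j ∈ (Finset.range (p - b (i0-1) - 1)).filter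
        (fun j => ¬(i0 = i0 ∧ j = k0-1)),
      ‖((-t0 + (1 + (i0:ℚ)*(p:ℚ) + (j:ℚ)) : ℚ) : ℚ_[p])‖) = 1 := by
    rw [hDD i0 hi0 hi0', if_neg (by simp)]
  have key : ‖(((Rnum n p r a).eval t0 : ℚ) : ℚ_[p])‖ ≤ (p:ℝ)⁻¹ *
      ‖(((RdenMain p (a 0) (b 0) *
        ∏ i ∈ Finset.Icc 2 nhat,
          ∏ j ∈ (Finset.range (p - b (i - 1) - 1)).filter (fun j => ¬(i = i0 ∧ j = k0 - 1)),
            (-X + C (1 + (i : ℚ) * p + (j : ℚ)))).eval t0 : ℚ) : ℚ_[p])‖ := by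
    rw [hNnormval, hDnormval]
    exact aux_assembly n nhat i0 ((p:ℝ)⁻¹) (le_of_lt hpinv0) hn4 hi0 hi0'
      (fun i => ∏ j ∈ Finset.range (p - a (i-1) - 1),
        ‖((t0 + (1 - r (i-1) - (p:ℚ) + (j:ℚ)) : ℚ) : ℚ_[p])‖)
      (fun i => ∏ j ∈ (Finset.range (p - b (i-1) - 1)).filter (fun j => ¬(i = i0 ∧ j = k0-1)),
        ‖((-t0 + (1 + (i:ℚ)*(p:ℚ) + (j:ℚ)) : ℚ) : ℚ_[p])‖)
      (fun i => hNN0 i) (fun i h1 h2 => c1 i h1 h2)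
      (c2 2 (by omega) (by omega) cm1)
      (c2 3 (by omega) (by omega) cm2)
      (c2 (i0+2) (by omega) (by omega) cm3)
      hFG' hGi0'
      (fun i => Finset.prod_nonneg (fun j _ => norm_nonneg _))
  refine ⟨hDne, ?_⟩
  have hpQpne : ((p:ℕ) : ℚ_[p]) ≠ 0 := Nat.cast_ne_zero.2 hp.ne_zero
  have hnormp : ‖((p:ℕ) : ℚ_[p])‖ = (p:ℝ)⁻¹ := Padic.norm_p
  have hCle : ‖((((Rnum n p r a).eval t0 /
      (RdenMain p (a 0) (b 0) *
        ∏ i ∈ Finset.Icc 2 nhat,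
          ∏ j ∈ (Finset.range (p - b (i - 1) - 1)).filter (fun j => ¬(i = i0 ∧ j = k0 - 1)),
            (-X + C (1 + (i : ℚ) * p + (j : ℚ)))).eval t0 : ℚ)) : ℚ_[p])‖ ≤ (p:ℝ)⁻¹ := by
    rw [Rat.cast_div, norm_div, div_le_iff₀ hDnormpos]
    exact key
  have hmem : ‖((((Rnum n p r a).eval t0 /
      (RdenMain p (a 0) (b 0) *
        ∏ i ∈ Finset.Icc 2 nhat,
          ∏ j ∈ (Finset.range (p - b (i - 1) - 1)).filter (fun j => ¬(i = i0 ∧ j = k0 - 1)),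
            (-X + C (1 + (i : ℚ) * p + (j : ℚ)))).eval t0 : ℚ)) : ℚ_[p]) /
      ((p:ℕ) : ℚ_[p])‖ ≤ 1 := by
    rw [norm_div, hnormp, div_le_one hpinv0]
    exact hCle
  refine ⟨⟨_, hmem⟩, ?_⟩
  have hcoe : (((⟨_, hmem⟩ : ℤ_[p]) : ℚ_[p])) = ((((Rnum n p r a).eval t0 /
      (RdenMain p (a 0) (b 0) *
        ∏ i ∈ Finset.Icc 2 nhat,
          ∏ j ∈ (Finset.range (p - b (i - 1) - 1)).filter (fun j => ¬(i = i0 ∧ j = k0 - 1)),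
            (-X + C (1 + (i : ℚ) * p + (j : ℚ)))).eval t0 : ℚ)) : ℚ_[p]) /
      ((p:ℕ) : ℚ_[p]) := rfl
  rw [hcoe]
  rw [mul_comm ((p:ℕ) : ℚ_[p]) _, div_mul_cancel₀ _ hpQpne]
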